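/- arXiv:1903.07490 — 2 statements merged into one kernel-verified Lean document; each statement's English description precedes it below -/
import Mathlib

section
/- For all i ∈ ℕ, 5·∑_{j=0}^{i} F_j · F_{i-j} = (i−1)·F_i + 2i·F_{i-1} (for i ≥ 1), i.e., the Fibonacci self-convolution satisfies ∑_{j=0}^{i} F_j F_{i-j} = ((i−1)F_i + 2iF_{i-1})/5. -/
open Finset

private lemma conv_rec (n : ℕ) :
    (∑ j ∈ Finset.range (n + 3), (Nat.fib j : ℤ) * Nat.fib (n + 2 - j))
      = (∑ j ∈ Finset.range (n + 2), (Nat.fib j : ℤ) * Nat.fib (n + 1 - j))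
        + (∑ j ∈ Finset.range (n + 1), (Nat.fib j : ℤ) * Nat.fib (n - j))
        + Nat.fib (n + 1) := by
  rw [show n + 3 = (n + 2) + 1 from rfl, Finset.sum_range_succ, Finset.sum_range_succ,
    Finset.sum_range_succ (f := fun j => (Nat.fib j : ℤ) * Nat.fib (n + 1 - j))]
  have h : ∀ j ∈ Finset.range (n + 1),
      (Nat.fib j : ℤ) * Nat.fib (n + 2 - j)
        = (Nat.fib j : ℤ) * Nat.fib (n + 1 - j) + (Nat.fib j : ℤ) * Nat.fib (n - j) := by
    intro j hj
    simp only [Finset.mem_range] at hj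
    have h1 : n + 2 - j = (n - j) + 2 := by omega
    have h2 : n + 1 - j = (n - j) + 1 := by omega
    rw [h1, h2, Nat.fib_add_two]
    push_cast
    ring
  rw [Finset.sum_congr rfl h, Finset.sum_add_distrib]
  simp

theorem stmt_8 : ∀ i : ℕ, 1 ≤ i →
    5 * ∑ j ∈ Finset.range (i + 1), (Nat.fib j : ℤ) * Nat.fib (i - j) =
      ((i : ℤ) - 1) * Nat.fib i + 2 * i * Nat.fib (i - 1) := by
  have key : ∀ n : ℕ,
      (5 * ∑ j ∈ Finset.range (n + 2), (Nat.fib j : ℤ) * Nat.fib (n + 1 - j) =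
        ((n : ℤ) + 1 - 1) * Nat.fib (n + 1) + 2 * (n + 1) * Nat.fib n) ∧
      (5 * ∑ j ∈ Finset.range (n + 3), (Nat.fib j : ℤ) * Nat.fib (n + 2 - j) =
        ((n : ℤ) + 2 - 1) * Nat.fib (n + 2) + 2 * (n + 2) * Nat.fib (n + 1)) := by
    intro n
    induction n with
    | zero => refine ⟨?_, ?_⟩ <;> norm_num [Finset.sum_range_succ]
    | succ m ih =>
      obtain ⟨ih1, ih2⟩ := ih
      refine ⟨by push_cast at ih2 ⊢; convert ih2 using 2 <;> ring_nf, ?_⟩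
      rw [show m + 1 + 3 = (m + 1) + 2 + 1 from rfl]
      rw [conv_rec (m + 1)]
      have hfib : (Nat.fib (m + 3) : ℤ) = Nat.fib (m + 2) + Nat.fib (m + 1) := by
        rw [show m + 3 = (m + 1) + 2 from rfl, Nat.fib_add_two]; push_cast; ring
      have hfib2 : (Nat.fib (m + 2) : ℤ) = Nat.fib (m + 1) + Nat.fib m := by
        rw [Nat.fib_add_two]; push_cast; ring
      push_cast
      rw [mul_add, mul_add]
      simp only [show m + 1 + 2 = m + 3 from rfl, show m + 1 + 1 = m + 2 from rfl]
      rw [ih2, ih1, hfib, hfib2]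
      ring
  intro i hi
  obtain ⟨n, rfl⟩ : ∃ n, i = n + 1 := ⟨i - 1, by omega⟩
  have := (key n).1
  simpa using this
end

section
/- Let F(i,j) be the double-recurrence Fibonacci numbers. Then for all m ∈ ℕ, 5·∑_{0 ≤ j ≤ i ≤ m} F(i,j) = 2·(m·L_{m+3} − L_{m+4} + 2·F_{m+2}) + 10, where L_k is the k-th Lucas number and F_k the k-th Fibonacci number. Equivalently, the sum of all double-recurrence Fibonacci numbers with indices on or below the main diagonal of the (m+1)×(m+1) square equals (2/5)(m·L_{m+3} − L_{m+4} + 2F_{m+2}) + 2. -/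
/-- Double-recurrence Fibonacci numbers. -/
def dF : ℕ → ℕ → ℕ
  | m, 0 => Nat.fib m
  | m, 1 => Nat.fib (m + 1)
  | 0, n => Nat.fib n
  | 1, n => Nat.fib (n + 1)
  | m + 2, n + 2 => dF (m + 1) (n + 1) + dF m n


/-- Lucas numbers. -/
def luc : ℕ → ℕ
  | 0 => 2
  | 1 => 1
  | n + 2 => luc (n + 1) + luc n

lemma luc_rec (n : ℕ) : luc (n + 2) = luc (n + 1) + luc n := rfl

lemma luc_fib : ∀ n : ℕ, (luc (n + 1) : ℤ) = Nat.fib n + Nat.fib (n + 2) := by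
  have key : ∀ n : ℕ, luc (n + 1) = Nat.fib n + Nat.fib (n + 2) ∧
      luc (n + 2) = Nat.fib (n + 1) + Nat.fib (n + 3) := by
    intro n
    induction n with
    | zero => constructor <;> simp [luc, Nat.fib]
    | succ k ih =>
      refine ⟨ih.2, ?_⟩
      have h1 : luc (k + 1) = Nat.fib k + Nat.fib (k + 2) := ih.1
      have h2 : luc (k + 2) = Nat.fib (k + 1) + Nat.fib (k + 3) := ih.2
      have h3 : Nat.fib (k + 3) = Nat.fib (k + 1) + Nat.fib (k + 2) := Nat.fib_add_two
      have h4 : Nat.fib (k + 4) = Nat.fib (k + 2) + Nat.fib (k + 3) := Nat.fib_add_two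
      have h5 : luc (k + 3) = luc (k + 2) + luc (k + 1) := luc_rec (k + 1)
      have h6 : Nat.fib (k + 2) = Nat.fib k + Nat.fib (k + 1) := Nat.fib_add_two
      show luc (k + 3) = Nat.fib (k + 2) + Nat.fib (k + 4)
      omega
  intro n
  exact_mod_cast congrArg Nat.cast (key n).1

lemma dF_rec (m n : ℕ) : dF (m + 2) (n + 2) = dF (m + 1) (n + 1) + dF m n := rfl

lemma dF_zero (m : ℕ) : dF m 0 = Nat.fib m := by
  rcases m with _ | _ | m <;> rfl

lemma dF_one (m : ℕ) : dF m 1 = Nat.fib (m + 1) := by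
  rcases m with _ | _ | m <;> rfl

lemma dF_row_sum : ∀ i : ℕ,
    5 * ∑ j ∈ Finset.range (i + 1), (dF i j : ℤ) =
      2 * i * luc (i + 1) + 4 * Nat.fib i := by
  have step : ∀ n : ℕ,
      (5 * ∑ j ∈ Finset.range (n + 1), (dF n j : ℤ) =
        2 * n * luc (n + 1) + 4 * Nat.fib n) →
      (5 * ∑ j ∈ Finset.range (n + 2), (dF (n + 1) j : ℤ) =
        2 * (n + 1) * luc (n + 2) + 4 * Nat.fib (n + 1)) →
      5 * ∑ j ∈ Finset.range (n + 3), (dF (n + 2) j : ℤ) =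
        2 * (n + 2) * luc (n + 3) + 4 * Nat.fib (n + 2) := by
    intro n ih1 ih2
    have split : ∑ j ∈ Finset.range (n + 3), (dF (n + 2) j : ℤ) =
        (∑ j ∈ Finset.range (n + 1), (dF (n + 2) (j + 2) : ℤ)) +
          dF (n + 2) 1 + dF (n + 2) 0 := by
      rw [Finset.sum_range_succ' (fun j => (dF (n + 2) j : ℤ)) (n + 2),
        Finset.sum_range_succ' (fun j => (dF (n + 2) (j + 1) : ℤ)) (n + 1)]
    have split2 : ∑ j ∈ Finset.range (n + 2), (dF (n + 1) j : ℤ) =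
        (∑ j ∈ Finset.range (n + 1), (dF (n + 1) (j + 1) : ℤ)) + dF (n + 1) 0 := by
      rw [Finset.sum_range_succ' (fun j => (dF (n + 1) j : ℤ)) (n + 1)]
    have hrec : ∑ j ∈ Finset.range (n + 1), (dF (n + 2) (j + 2) : ℤ) =
        (∑ j ∈ Finset.range (n + 1), (dF (n + 1) (j + 1) : ℤ)) +
          ∑ j ∈ Finset.range (n + 1), (dF n j : ℤ) := by
      rw [← Finset.sum_add_distrib]
      refine Finset.sum_congr rfl fun j _ => ?_
      rw [dF_rec]; push_cast; ring
    have hL1 := luc_fib n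
    have hL2 := luc_fib (n + 1)
    have hL3 := luc_fib (n + 2)
    have hf1 : (Nat.fib (n + 2) : ℤ) = Nat.fib (n + 1) + Nat.fib n := by
      rw [Nat.fib_add_two]; push_cast; ring
    have hf2 : (Nat.fib (n + 3) : ℤ) = Nat.fib (n + 2) + Nat.fib (n + 1) := by
      rw [Nat.fib_add_two (n := n + 1)]; push_cast; ring
    have hf3 : (Nat.fib (n + 4) : ℤ) = Nat.fib (n + 3) + Nat.fib (n + 2) := by
      rw [Nat.fib_add_two (n := n + 2)]; push_cast; ring
    rw [split, dF_one, dF_zero, hrec]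
    have key : (∑ j ∈ Finset.range (n + 1), (dF (n + 1) (j + 1) : ℤ)) =
        (∑ j ∈ Finset.range (n + 2), (dF (n + 1) j : ℤ)) - dF (n + 1) 0 := by
      rw [split2]; ring
    rw [key, dF_zero]
    have e : 5 * ((∑ j ∈ Finset.range (n + 2), (dF (n + 1) j : ℤ)) - Nat.fib (n + 1) +
        (∑ j ∈ Finset.range (n + 1), (dF n j : ℤ)) + Nat.fib (n + 3) + Nat.fib (n + 2)) =
        5 * (∑ j ∈ Finset.range (n + 2), (dF (n + 1) j : ℤ)) +
        5 * (∑ j ∈ Finset.range (n + 1), (dF n j : ℤ)) +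
        5 * ((Nat.fib (n + 3) : ℤ) - Nat.fib (n + 1) + Nat.fib (n + 2)) := by ring
    rw [e, ih1, ih2, hL1, hL2, hL3, hf3, hf2, hf1]
    push_cast
    ring
  have key : ∀ i : ℕ,
      (5 * ∑ j ∈ Finset.range (i + 1), (dF i j : ℤ) =
        2 * i * luc (i + 1) + 4 * Nat.fib i) ∧
      (5 * ∑ j ∈ Finset.range (i + 2), (dF (i + 1) j : ℤ) =
        2 * (i + 1) * luc (i + 2) + 4 * Nat.fib (i + 1)) := by
    intro i
    induction i with
    | zero =>
      constructor <;> (simp [Finset.sum_range_succ, dF, luc, Nat.fib]; try ring)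
    | succ k ih =>
      refine ⟨ih.2, ?_⟩
      have := step k ih.1 ih.2
      push_cast at this ⊢
      convert this using 2 <;> push_cast <;> ring
  exact fun i => (key i).1

theorem stmt_10 : ∀ m : ℕ,
    5 * ∑ i ∈ Finset.range (m + 1), ∑ j ∈ Finset.range (i + 1), (dF i j : ℤ) =
      2 * ((m : ℤ) * luc (m + 3) - luc (m + 4) + 2 * Nat.fib (m + 2)) + 10 := by
  intro m
  induction m with
  | zero => simp [dF, luc, Nat.fib]
  | succ k ih =>
    rw [Finset.sum_range_succ, mul_add, ih, dF_row_sum]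
    have hL3 : (luc (k + 4) : ℤ) = luc (k + 3) + luc (k + 2) := by
      rw [luc_rec (k + 2)]; push_cast; ring
    have hL4 : (luc (k + 5) : ℤ) = luc (k + 4) + luc (k + 3) := by
      rw [luc_rec (k + 3)]; push_cast; ring
    have hf : (Nat.fib (k + 3) : ℤ) = Nat.fib (k + 2) + Nat.fib (k + 1) := by
      rw [Nat.fib_add_two (n := k + 1)]; push_cast; ring
    have hL2 := luc_fib (k + 1)
    have hL3' := luc_fib (k + 2)
    have hf2 : (Nat.fib (k + 2) : ℤ) = Nat.fib (k + 1) + Nat.fib k := by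
      rw [Nat.fib_add_two]; push_cast; ring
    push_cast [hL4, hL3, hf, hL3', hL2, hf2]
    ring
end
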